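/- Let p ∈ (0,1) and w₀ = −p/(1 + p²), and let f ∈ Σ*(p,w₀). Then |a₂(f) − (1 + p² + p⁴)/(p(1 + p²))| ≤ p/(1 + p²). -/

import Mathlib

open Complex Metric Set

/-- The second Taylor coefficient `a₂(f) = f''(0)/2`. -/
noncomputable def a2 (f : ℂ → ℂ) : ℂ := iteratedDeriv 2 f 0 / 2

/-- `f` belongs to the class `Σ*(p, w₀)` with associated holomorphic function `P`:
`f` is holomorphic on the unit disc except for a simple pole at `p`, `f 0 = 0`,
`f' 0 = 1`, `f` omits `w₀`, and
`P z = -z f'(z)/(f z - w₀) - p/(z - p) + p z/(1 - p z)` extends holomorphically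
to the unit disc with `P 0 = 1` and `Re (P z) > 0` there. -/
def SigmaStarWith (p : ℝ) (w₀ : ℂ) (f P : ℂ → ℂ) : Prop :=
  (∃ g : ℂ → ℂ, DifferentiableOn ℂ g (ball (0 : ℂ) 1) ∧ g p ≠ 0 ∧
      ∀ z ∈ ball (0 : ℂ) 1, z ≠ (p : ℂ) → f z = g z / (z - p)) ∧
  f 0 = 0 ∧ deriv f 0 = 1 ∧
  (∀ z ∈ ball (0 : ℂ) 1, z ≠ (p : ℂ) → f z ≠ w₀) ∧
  DifferentiableOn ℂ P (ball (0 : ℂ) 1) ∧ P 0 = 1 ∧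
  (∀ z ∈ ball (0 : ℂ) 1, 0 < (P z).re) ∧
  (∀ z ∈ ball (0 : ℂ) 1, z ≠ (p : ℂ) →
    P z = -z * deriv f z / (f z - w₀) - p / (z - p) + p * z / (1 - p * z))

/-- `f` belongs to the class `Σ*(p, w₀)`. -/
def SigmaStar (p : ℝ) (w₀ : ℂ) (f : ℂ → ℂ) : Prop :=
  ∃ P : ℂ → ℂ, SigmaStarWith p w₀ f P

/-- `ω` is the Schwarz function associated to `P`, i.e. a holomorphic self-map of
the unit disc fixing `0` with `P = (1 + ω)/(1 - ω)`. -/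
def SchwarzOf (P ω : ℂ → ℂ) : Prop :=
  DifferentiableOn ℂ ω (ball (0 : ℂ) 1) ∧
  MapsTo ω (ball (0 : ℂ) 1) (ball (0 : ℂ) 1) ∧ ω 0 = 0 ∧
  ∀ z ∈ ball (0 : ℂ) 1, P z = (1 + ω z) / (1 - ω z)

/-- Carathéodory-type bound: if `P` is holomorphic on the unit disc with positive real
part, `P 0 = 1` and `deriv P 0 = 0`, then `‖deriv (deriv P) 0‖ ≤ 4`. -/
lemma caratheodory_second (P : ℂ → ℂ)
    (hP : DifferentiableOn ℂ P (ball (0 : ℂ) 1)) (hP0 : P 0 = 1)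
    (hPre : ∀ z ∈ ball (0 : ℂ) 1, 0 < (P z).re) (hP'0 : deriv P 0 = 0) :
    ‖deriv (deriv P) 0‖ ≤ 4 := by
  have h0b : (0 : ℂ) ∈ ball (0 : ℂ) 1 := mem_ball_self one_pos
  have hden : ∀ z ∈ ball (0 : ℂ) 1, P z + 1 ≠ 0 := by
    intro z hz h
    have h2 : (P z + 1).re = 0 := by rw [h]; simp
    have := hPre z hz
    simp [Complex.add_re] at h2; linarith
  set ω : ℂ → ℂ := fun z => (P z - 1) / (P z + 1) with hωdef
  have hω_d : DifferentiableOn ℂ ω (ball (0 : ℂ) 1) :=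
    (hP.sub (differentiableOn_const 1)).div (hP.add (differentiableOn_const 1)) hden
  have hω0 : ω 0 = 0 := by simp [hωdef, hP0]
  have hω_maps : MapsTo ω (ball (0 : ℂ) 1) (ball (0 : ℂ) 1) := by
    intro z hz
    rw [mem_ball_zero_iff]
    have hne := hden z hz
    have habs : ‖P z - 1‖ < ‖P z + 1‖ := by
      have hlt : Complex.normSq (P z - 1) < Complex.normSq (P z + 1) := by
        have := hPre z hz
        simp only [Complex.normSq_apply, Complex.sub_re, Complex.sub_im, Complex.add_re,
          Complex.add_im, Complex.one_re, Complex.one_im]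
        nlinarith
      have := Real.sqrt_lt_sqrt (Complex.normSq_nonneg _) hlt
      simpa [Complex.norm_def] using this
    rw [hωdef]
    simp only [norm_div]
    rw [div_lt_one (norm_pos_iff.2 hne)]
    exact habs
  -- derivative of ω on the ball
  have hω_has : ∀ z ∈ ball (0 : ℂ) 1,
      HasDerivAt ω ((deriv P z * (P z + 1) - (P z - 1) * deriv P z) / (P z + 1) ^ 2) z := by
    intro z hz
    have hPd : HasDerivAt P (deriv P z) z :=
      ((hP.analyticOnNhd isOpen_ball z hz).differentiableAt).hasDerivAt
    exact ((hPd.sub_const 1).div (hPd.add_const 1) (hden z hz))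
  have hderiv_ω : ∀ z ∈ ball (0 : ℂ) 1,
      deriv ω z = 2 * deriv P z / (P z + 1) ^ 2 := by
    intro z hz
    rw [(hω_has z hz).deriv]
    ring
  -- second derivative of ω at 0
  have hω'0 : deriv ω 0 = 0 := by rw [hderiv_ω 0 h0b, hP'0]; simp
  have hω''0 : deriv (deriv ω) 0 = deriv (deriv P) 0 / 2 := by
    have heq : EqOn (deriv ω) (fun z => 2 * deriv P z / (P z + 1) ^ 2) (ball (0 : ℂ) 1) :=
      fun z hz => hderiv_ω z hz
    rw [(heq.eventuallyEq_of_mem (isOpen_ball.mem_nhds h0b)).deriv_eq]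
    have hPan := hP.analyticOnNhd isOpen_ball
    have hP'an : AnalyticOnNhd ℂ (deriv P) (ball (0 : ℂ) 1) := hPan.deriv
    have hPd : HasDerivAt P (deriv P 0) 0 := ((hPan 0 h0b).differentiableAt).hasDerivAt
    have hP'd : HasDerivAt (deriv P) (deriv (deriv P) 0) 0 :=
      ((hP'an 0 h0b).differentiableAt).hasDerivAt
    have h2 : HasDerivAt (fun z => 2 * deriv P z / (P z + 1) ^ 2)
        ((2 * deriv (deriv P) 0 * (P 0 + 1) ^ 2 -
          2 * deriv P 0 * (2 * (P 0 + 1) ^ 1 * deriv P 0)) / ((P 0 + 1) ^ 2) ^ 2) 0 := by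
      exact (hP'd.const_mul 2).div ((hPd.add_const 1).pow 2)
        (pow_ne_zero 2 (hden 0 h0b))
    rw [h2.deriv, hP0, hP'0]
    norm_num
    ring
  -- Schwarz lemma applied twice
  set G : ℂ → ℂ := dslope ω 0 with hGdef
  have hG_bound : ∀ z ∈ ball (0 : ℂ) 1, ‖G z‖ ≤ 1 := by
    intro z hz
    have hm : MapsTo ω (ball (0 : ℂ) 1) (ball (ω 0) 1) := by rw [hω0]; exact hω_maps
    simpa using Complex.norm_dslope_le_div_of_mapsTo_ball hω_d (hm.mono_right ball_subset_closedBall) hz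
  have hG_d : DifferentiableOn ℂ G (ball (0 : ℂ) 1) :=
    (differentiableOn_dslope (isOpen_ball.mem_nhds h0b)).mpr hω_d
  have hG0 : G 0 = 0 := by rw [hGdef, dslope_same]; exact hω'0
  have hG'_bound : ‖deriv G 0‖ ≤ 1 := by
    refine le_of_forall_gt_imp_ge_of_dense fun R hR => ?_
    have hm : MapsTo G (ball (0 : ℂ) 1) (ball (G 0) R) := by
      intro z hz
      rw [hG0, mem_ball_zero_iff]
      exact lt_of_le_of_lt (hG_bound z hz) hR
    have := Complex.norm_dslope_le_div_of_mapsTo_ball hG_d (hm.mono_right ball_subset_closedBall) h0b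
    simpa [dslope_same] using this
  -- relate deriv G 0 to deriv (deriv ω) 0
  have hωG : ω = fun z => z * G z := by
    funext z
    have := sub_smul_dslope ω 0 z
    rw [sub_zero, smul_eq_mul, hω0, sub_zero] at this
    exact this.symm
  have hG_an := hG_d.analyticOnNhd isOpen_ball
  have hG'an : AnalyticOnNhd ℂ (deriv G) (ball (0 : ℂ) 1) := hG_an.deriv
  have hderiv_ω2 : ∀ z ∈ ball (0 : ℂ) 1, deriv ω z = G z + z * deriv G z := by
    intro z hz
    have hGd : HasDerivAt G (deriv G z) z := ((hG_an z hz).differentiableAt).hasDerivAt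
    have : HasDerivAt (fun w => w * G w) (1 * G z + z * deriv G z) z :=
      (hasDerivAt_id z).mul hGd
    rw [hωG, this.deriv]; ring
  have hfinal : deriv (deriv ω) 0 = 2 * deriv G 0 := by
    have heq : EqOn (deriv ω) (fun z => G z + z * deriv G z) (ball (0 : ℂ) 1) :=
      fun z hz => hderiv_ω2 z hz
    rw [(heq.eventuallyEq_of_mem (isOpen_ball.mem_nhds h0b)).deriv_eq]
    have hGd : HasDerivAt G (deriv G 0) 0 := ((hG_an 0 h0b).differentiableAt).hasDerivAt
    have hG'd : HasDerivAt (deriv G) (deriv (deriv G) 0) 0 :=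
      ((hG'an 0 h0b).differentiableAt).hasDerivAt
    have h2 : HasDerivAt (fun z => G z + z * deriv G z)
        (deriv G 0 + (1 * deriv G 0 + 0 * deriv (deriv G) 0)) 0 :=
      hGd.add ((hasDerivAt_id 0).mul hG'd)
    rw [h2.deriv]; ring
  have : ‖deriv (deriv P) 0 / 2‖ = ‖2 * deriv G 0‖ := by
    rw [← hω''0, hfinal]
  rw [norm_div, norm_mul] at this
  simp only [Complex.norm_ofNat, Complex.norm_two] at this
  have h4 : ‖deriv (deriv P) 0‖ = 4 * ‖deriv G 0‖ := by
    field_simp at this; linarith [this]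
  rw [h4]
  have := hG'_bound
  linarith

theorem stmt_12 (p : ℝ) (hp : 0 < p ∧ p < 1) (w₀ : ℂ)
    (hw : w₀ = -(p : ℂ) / (1 + (p : ℂ) ^ 2))
    (f : ℂ → ℂ) (hf : SigmaStar p w₀ f) :
    ‖a2 f - (1 + (p : ℂ) ^ 2 + (p : ℂ) ^ 4) / (p * (1 + (p : ℂ) ^ 2))‖ ≤
      p / (1 + p ^ 2) := by
  obtain ⟨hp0, hp1⟩ := hp
  obtain ⟨P, ⟨g, hg, hgp, hfg⟩, hf0, hf'0, hfw, hP, hP0, hPre, hPeq⟩ := hf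
  have hpC : (p : ℂ) ≠ 0 := by exact_mod_cast hp0.ne'
  have h1p2R : (0:ℝ) < 1 + p ^ 2 := by positivity
  have h1p : (1:ℂ) + (p:ℂ) ^ 2 ≠ 0 := by
    have h : ((1 + p ^ 2 : ℝ) : ℂ) ≠ 0 := by exact_mod_cast h1p2R.ne'
    push_cast at h; exact h
  have hw0 : w₀ ≠ 0 := by rw [hw]; exact div_ne_zero (neg_ne_zero.2 hpC) h1p
  set S := ball (0:ℂ) p with hSdef
  have hSo : IsOpen S := isOpen_ball
  have hS1 : S ⊆ ball (0:ℂ) 1 := ball_subset_ball (le_of_lt hp1)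
  have h0S : (0:ℂ) ∈ S := mem_ball_self hp0
  have h0b1 : (0:ℂ) ∈ ball (0:ℂ) 1 := mem_ball_self one_pos
  have hzp : ∀ z ∈ S, z ≠ (p:ℂ) := by
    intro z hz h
    rw [mem_ball_zero_iff, h] at hz
    simp [Complex.norm_real, abs_of_pos hp0] at hz
  have h1pz : ∀ z ∈ S, 1 - (p:ℂ) * z ≠ 0 := by
    intro z hz h
    rw [sub_eq_zero] at h
    have h1 : ‖(p:ℂ) * z‖ < 1 := by
      rw [norm_mul, Complex.norm_real, Real.norm_eq_abs, abs_of_pos hp0]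
      have hzn : ‖z‖ < p := by rwa [mem_ball_zero_iff] at hz
      nlinarith [norm_nonneg z]
    rw [← h] at h1
    simp at h1
  have hfE : ∀ z ∈ S, f z - w₀ ≠ 0 := fun z hz => sub_ne_zero.2 (hfw z (hS1 hz) (hzp z hz))
  -- f is analytic on S
  have hfd : DifferentiableOn ℂ f S := by
    have hd : DifferentiableOn ℂ (fun z => g z / (z - p)) S :=
      (hg.mono hS1).div (differentiableOn_id.sub (differentiableOn_const _))
        (fun z hz => sub_ne_zero.2 (hzp z hz))
    exact hd.congr (fun z hz => hfg z (hS1 hz) (hzp z hz))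
  have hf_an : AnalyticOnNhd ℂ f S := hfd.analyticOnNhd hSo
  have hf'an : AnalyticOnNhd ℂ (deriv f) S := hf_an.deriv
  have hf''an : AnalyticOnNhd ℂ (deriv (deriv f)) S := hf'an.deriv
  have hP_an : AnalyticOnNhd ℂ P (ball (0:ℂ) 1) := hP.analyticOnNhd isOpen_ball
  have hP'an : AnalyticOnNhd ℂ (deriv P) (ball (0:ℂ) 1) := hP_an.deriv
  set A : ℂ → ℂ := fun z => P z + (p:ℂ) / (z - p) - (p:ℂ) * z / (1 - p * z) with hAdef
  set A₁ : ℂ → ℂ := fun z => deriv P z - (p:ℂ) / (z - p) ^ 2 - (p:ℂ) / (1 - p * z) ^ 2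
    with hA1def
  -- the key identity from the structural equation
  have hkey : ∀ z ∈ S, A z * (f z - w₀) + z * deriv f z = 0 := by
    intro z hz
    have h1 := hPeq z (hS1 hz) (hzp z hz)
    have h2 := hfE z hz
    have hA : A z = -z * deriv f z / (f z - w₀) := by
      simp only [hAdef]
      rw [h1]; ring
    rw [hA, div_mul_cancel₀ _ h2]; ring
  have hA_has : ∀ z ∈ S, HasDerivAt A (A₁ z) z := by
    intro z hz
    have hPd : HasDerivAt P (deriv P z) z :=
      ((hP_an z (hS1 hz)).differentiableAt).hasDerivAt
    have h3 := sub_ne_zero.2 (hzp z hz)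
    have h4 := h1pz z hz
    have hr1 : HasDerivAt (fun w : ℂ => (p:ℂ) / (w - p))
        ((0 * (z - p) - p * 1) / (z - p) ^ 2) z :=
      (hasDerivAt_const z (p:ℂ)).div ((hasDerivAt_id z).sub_const _) h3
    have hn : HasDerivAt (fun w : ℂ => (p:ℂ) * w) p z := by
      simpa using (hasDerivAt_id z).const_mul (p:ℂ)
    have hd : HasDerivAt (fun w : ℂ => 1 - (p:ℂ) * w) (0 - p) z :=
      (hasDerivAt_const z 1).sub hn
    have hr2 : HasDerivAt (fun w : ℂ => (p:ℂ) * w / (1 - p * w))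
        ((p * (1 - p * z) - p * z * (0 - p)) / (1 - p * z) ^ 2) z := hn.div hd h4
    have hall := (hPd.add hr1).sub hr2
    have hval : A₁ z = deriv P z + (0 * (z - p) - p * 1) / (z - p) ^ 2 -
        (p * (1 - p * z) - p * z * (0 - p)) / (1 - p * z) ^ 2 := by
      simp only [hA1def]
      field_simp
      ring
    rw [hval]
    exact hall
  set F₁ : ℂ → ℂ := fun z =>
      A₁ z * (f z - w₀) + A z * deriv f z + (deriv f z + z * deriv (deriv f) z) with hF1def
  have hF0_has : ∀ z ∈ S,
      HasDerivAt (fun w => A w * (f w - w₀) + w * deriv f w) (F₁ z) z := by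
    intro z hz
    have hfd1 : HasDerivAt f (deriv f z) z := ((hf_an z hz).differentiableAt).hasDerivAt
    have hfd2 : HasDerivAt (deriv f) (deriv (deriv f) z) z :=
      ((hf'an z hz).differentiableAt).hasDerivAt
    have h1 : HasDerivAt (fun w => A w * (f w - w₀))
        (A₁ z * (f z - w₀) + A z * deriv f z) z := (hA_has z hz).mul (hfd1.sub_const w₀)
    have h2 : HasDerivAt (fun w => w * deriv f w)
        (1 * deriv f z + z * deriv (deriv f) z) z := (hasDerivAt_id z).mul hfd2
    have hall := h1.add h2
    have hval : F₁ z = A₁ z * (f z - w₀) + A z * deriv f z +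
        (1 * deriv f z + z * deriv (deriv f) z) := by
      simp only [hF1def]; ring
    rw [hval]
    exact hall
  have hF1zero : ∀ z ∈ S, F₁ z = 0 := by
    intro z hz
    have heq : EqOn (fun w => A w * (f w - w₀) + w * deriv f w) (fun _ => (0:ℂ)) S := hkey
    have hd := (heq.eventuallyEq_of_mem (hSo.mem_nhds hz)).deriv_eq
    rw [(hF0_has z hz).deriv] at hd
    simpa using hd
  -- first-order consequence : deriv P 0 = 0
  have hE1 := hF1zero 0 h0S
  simp only [hF1def, hA1def, hAdef, hf0, hf'0, hP0] at hE1
  have hP'0 : deriv P 0 = 0 := by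
    rw [hw] at hE1
    field_simp at hE1
    have h5 : deriv P 0 * (p:ℂ) ^ 3 = 0 := by linear_combination hE1
    exact (mul_eq_zero.1 h5).resolve_right (pow_ne_zero 3 hpC)
  -- second-order consequence
  have hF1deriv0 : deriv F₁ 0 = 0 := by
    have heq : EqOn F₁ (fun _ => (0:ℂ)) S := hF1zero
    rw [(heq.eventuallyEq_of_mem (hSo.mem_nhds h0S)).deriv_eq]
    simp
  have hne0p : (0:ℂ) - p ≠ 0 := sub_ne_zero.2 (hzp 0 h0S)
  have hne0q : 1 - (p:ℂ) * 0 ≠ 0 := h1pz 0 h0S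
  have hfd1 : HasDerivAt f (deriv f 0) 0 := ((hf_an 0 h0S).differentiableAt).hasDerivAt
  have hfd2 : HasDerivAt (deriv f) (deriv (deriv f) 0) 0 :=
    ((hf'an 0 h0S).differentiableAt).hasDerivAt
  have hfd3 : HasDerivAt (deriv (deriv f)) (deriv (deriv (deriv f)) 0) 0 :=
    ((hf''an 0 h0S).differentiableAt).hasDerivAt
  have hP''d : HasDerivAt (deriv P) (deriv (deriv P) 0) 0 :=
    ((hP'an 0 h0b1).differentiableAt).hasDerivAt
  have hq1 : HasDerivAt (fun w : ℂ => (p:ℂ) / (w - p) ^ 2)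
      ((0 * ((0:ℂ) - p) ^ 2 - p * (2 * ((0:ℂ) - p) ^ 1 * 1)) / (((0:ℂ) - p) ^ 2) ^ 2) 0 :=
    (hasDerivAt_const 0 (p:ℂ)).div (((hasDerivAt_id 0).sub_const _).pow 2)
      (pow_ne_zero 2 hne0p)
  have hn0 : HasDerivAt (fun w : ℂ => (p:ℂ) * w) p 0 := by
    simpa using (hasDerivAt_id (0:ℂ)).const_mul (p:ℂ)
  have hd0 : HasDerivAt (fun w : ℂ => 1 - (p:ℂ) * w) (0 - p) 0 :=
    (hasDerivAt_const 0 1).sub hn0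
  have hq2 : HasDerivAt (fun w : ℂ => (p:ℂ) / (1 - p * w) ^ 2)
      ((0 * (1 - (p:ℂ) * 0) ^ 2 - p * (2 * (1 - (p:ℂ) * 0) ^ 1 * (0 - p))) /
        ((1 - (p:ℂ) * 0) ^ 2) ^ 2) 0 :=
    (hasDerivAt_const 0 (p:ℂ)).div (hd0.pow 2) (pow_ne_zero 2 hne0q)
  have hA1_has : HasDerivAt A₁
      (deriv (deriv P) 0 -
        (0 * ((0:ℂ) - p) ^ 2 - p * (2 * ((0:ℂ) - p) ^ 1 * 1)) / (((0:ℂ) - p) ^ 2) ^ 2 -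
        (0 * (1 - (p:ℂ) * 0) ^ 2 - p * (2 * (1 - (p:ℂ) * 0) ^ 1 * (0 - p))) /
          ((1 - (p:ℂ) * 0) ^ 2) ^ 2) 0 := (hP''d.sub hq1).sub hq2
  have hA_has0 : HasDerivAt A (A₁ 0) 0 := hA_has 0 h0S
  have hF1_has : HasDerivAt F₁
      ((deriv (deriv P) 0 -
          (0 * ((0:ℂ) - p) ^ 2 - p * (2 * ((0:ℂ) - p) ^ 1 * 1)) / (((0:ℂ) - p) ^ 2) ^ 2 -
          (0 * (1 - (p:ℂ) * 0) ^ 2 - p * (2 * (1 - (p:ℂ) * 0) ^ 1 * (0 - p))) /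
            ((1 - (p:ℂ) * 0) ^ 2) ^ 2) * (f 0 - w₀) + A₁ 0 * deriv f 0 +
        (A₁ 0 * deriv f 0 + A 0 * deriv (deriv f) 0) +
        (deriv (deriv f) 0 + (1 * deriv (deriv f) 0 + 0 * deriv (deriv (deriv f)) 0))) 0 :=
    ((hA1_has.mul (hfd1.sub_const w₀)).add (hA_has0.mul hfd2)).add
      (hfd2.add ((hasDerivAt_id 0).mul hfd3))
  have hE2 : (deriv (deriv P) 0 -
          (0 * ((0:ℂ) - p) ^ 2 - p * (2 * ((0:ℂ) - p) ^ 1 * 1)) / (((0:ℂ) - p) ^ 2) ^ 2 -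
          (0 * (1 - (p:ℂ) * 0) ^ 2 - p * (2 * (1 - (p:ℂ) * 0) ^ 1 * (0 - p))) /
            ((1 - (p:ℂ) * 0) ^ 2) ^ 2) * (f 0 - w₀) + A₁ 0 * deriv f 0 +
        (A₁ 0 * deriv f 0 + A 0 * deriv (deriv f) 0) +
        (deriv (deriv f) 0 + (1 * deriv (deriv f) 0 + 0 * deriv (deriv (deriv f)) 0)) = 0 := by
    rw [← hF1_has.deriv]; exact hF1deriv0
  -- express a2
  have ha2 : a2 f = deriv (deriv f) 0 / 2 := by
    rw [a2, iteratedDeriv_succ, iteratedDeriv_one]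
  -- the main algebraic identity
  have hA0 : A 0 = 0 := by
    simp only [hAdef, mul_zero, zero_sub, sub_zero, zero_div]
    rw [hP0, div_neg, div_self hpC]
    ring
  have hA10 : A₁ 0 = deriv P 0 - 1 / (p:ℂ) - p := by
    simp only [hA1def, mul_zero, zero_sub, sub_zero, one_pow]
    rw [show ((-(p:ℂ)) ^ 2) = (p:ℂ) ^ 2 by ring]
    field_simp
  have hkey2 : a2 f - (1 + (p:ℂ) ^ 2 + (p:ℂ) ^ 4) / (p * (1 + (p:ℂ) ^ 2)) =
      w₀ * deriv (deriv P) 0 / 4 := by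
    rw [ha2]
    rw [hA10, hA0, hf0, hf'0, hP'0] at hE2
    field_simp at hE2
    have hwp : w₀ * (1 + (p:ℂ) ^ 2) = -(p:ℂ) := by rw [hw]; field_simp
    have hY : -w₀ * deriv (deriv P) 0 * (p:ℂ) ^ 2 + 2 * w₀ + 2 * w₀ * (p:ℂ) ^ 4 -
        2 * p - 2 * (p:ℂ) ^ 3 + 2 * deriv (deriv f) 0 * (p:ℂ) ^ 2 = 0 := by
      have h4 : (p:ℂ) ^ 4 ≠ 0 := pow_ne_zero _ hpC
      refine mul_left_cancel₀ h4 ?_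
      rw [mul_zero]
      linear_combination (-(p:ℂ) ^ 2) * hE2
    field_simp
    refine mul_left_cancel₀ hpC ?_
    linear_combination (2 * (1 + (p:ℂ) ^ 2)) * hY + (-4 * (1 + (p:ℂ) ^ 4)) * hwp
  rw [hkey2]
  have hbound := caratheodory_second P hP hP0 hPre hP'0
  have habsw : ‖w₀‖ = p / (1 + p ^ 2) := by
    rw [hw]
    rw [norm_div, norm_neg]
    have h1 : (1 : ℂ) + (p:ℂ) ^ 2 = ((1 + p ^ 2 : ℝ) : ℂ) := by push_cast; ring
    rw [h1, Complex.norm_real, Complex.norm_real, Real.norm_eq_abs, Real.norm_eq_abs, abs_of_pos hp0, abs_of_pos h1p2R]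
  rw [norm_div, norm_mul, habsw]
  simp only [Complex.norm_ofNat]
  rw [div_le_iff₀ (by norm_num : (0:ℝ) < 4)]
  exact mul_le_mul_of_nonneg_left hbound (by positivity)
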